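/- The Grothendieck polynomials satisfy the transition identity: G_{(1^p)}(x_1,...,x_k) = G_{(1^p)}(x_1,...,x_{k−1}) + x_k·G_{(1^{p−1})}(x_1,...,x_{k−1}) − x_k·G_{(1^p)}(x_1,...,x_{k−1}), for 1 ≤ p ≤ k, where G_{(1^p)}(x_1,...,x_k) is the Grothendieck polynomial of the cycle c_{[k,p]} = (k−p+1, k−p+2, ..., k+1). -/

import Mathlib

open MvPolynomial

noncomputable section

/-- The length (number of inversions) of a finitely supported permutation of ℕ. -/
def len (w : Equiv.Perm ℕ) : ℕ := Set.ncard {p : ℕ × ℕ | p.1 < p.2 ∧ w p.2 < w p.1}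

/-- The cycle `(a, a+1, ..., b)` sending `a ↦ a+1 ↦ ... ↦ b ↦ a`, as a permutation of ℕ. -/
def cyc (a b : ℕ) : Equiv.Perm ℕ :=
  ((List.range (b - a)).map (fun i => Equiv.swap (a + i) (a + i + 1))).prod

/-- `IsGrothendieck G` : the family `G w ∈ ℤ[x_1, x_2, ...]` is the family of Grothendieck
polynomials: for each `n ≥ 1`, the longest permutation `ω_0` of `S_n` (acting on positions
`1, ..., n`) has `G ω_0 = x_1^{n-1} x_2^{n-2} ⋯ x_{n-1}`, and whenever
`ℓ(w·s_i) = ℓ(w) - 1` (with `s_i` the transposition `(i, i+1)`), one has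
`G (w·s_i) = π_i (G w)`, where `π_i f = ∂_i((1 - x_{i+1})·f)` and `∂_i` is the divided
difference operator, characterized by `(x_i - x_{i+1})·∂_i f = f - s_i f` on polynomials. -/
def IsGrothendieck (G : Equiv.Perm ℕ → MvPolynomial ℕ ℤ) : Prop :=
  (∀ n, 1 ≤ n → ∀ w : Equiv.Perm ℕ,
      (∀ i, 1 ≤ i → i ≤ n → w i = n + 1 - i) → (∀ i, n < i → w i = i) → w 0 = 0 →
      G w = ∏ i ∈ Finset.Icc 1 (n-1), X i ^ (n - i)) ∧
  (∃ D : ℕ → MvPolynomial ℕ ℤ → MvPolynomial ℕ ℤ,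
      (∀ i f, (X i - X (i+1)) * D i f = f - MvPolynomial.rename (Equiv.swap i (i+1)) f) ∧
      (∀ (w : Equiv.Perm ℕ) (i : ℕ), 1 ≤ i →
        len (w * Equiv.swap i (i+1)) + 1 = len w →
        G (w * Equiv.swap i (i+1)) = D i ((1 - X (i+1)) * G w)))

/-- `Gcol G k p` is `G_{(1^p)}(x_1, ..., x_k)`, the Grothendieck polynomial of the cycle
`c_{[k,p]} = (k-p+1, k-p+2, ..., k+1)`, with the convention that it is `0` for `p > k`. -/
def Gcol (G : Equiv.Perm ℕ → MvPolynomial ℕ ℤ) (k p : ℕ) : MvPolynomial ℕ ℤ :=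
  if p ≤ k then G (cyc (k - p + 1) (k + 1)) else 0

namespace GT




abbrev Poly := MvPolynomial ℕ ℤ

def mdeg (m : ℕ →₀ ℕ) : ℕ := m.sum fun _ e => e

lemma mdeg_add (a b : ℕ →₀ ℕ) : mdeg (a + b) = mdeg a + mdeg b :=
  Finsupp.sum_add_index' (fun _ => rfl) (fun _ _ _ => rfl)

lemma mdeg_single (i e : ℕ) : mdeg (Finsupp.single i e) = e :=
  Finsupp.sum_single_index rfl

lemma apply_le_mdeg (m : ℕ →₀ ℕ) (i : ℕ) : m i ≤ mdeg m := by
  rcases eq_or_ne (m i) 0 with h | h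
  · simp [h]
  · have hi : i ∈ m.support := Finsupp.mem_support_iff.mpr h
    calc m i ≤ ∑ j ∈ m.support, m j := Finset.single_le_sum (fun j _ => Nat.zero_le _) hi
    _ = mdeg m := rfl

/-- all monomials have total degree ≥ L -/
def lowf (L : ℕ) (f : Poly) : Prop := ∀ m : ℕ →₀ ℕ, mdeg m < L → coeff m f = 0

/-- the variable j does not occur -/
def avoid (j : ℕ) (f : Poly) : Prop := ∀ m : ℕ →₀ ℕ, m j ≠ 0 → coeff m f = 0

lemma lowf_zero (L : ℕ) : lowf L (0 : Poly) := fun _ _ => rfl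

lemma lowf_anything (f : Poly) : lowf 0 f := fun _ h => absurd h (Nat.not_lt_zero _)

lemma lowf_mono {L L' : ℕ} (h : L' ≤ L) {f : Poly} (hf : lowf L f) : lowf L' f :=
  fun m hm => hf m (lt_of_lt_of_le hm h)

lemma lowf_X (i : ℕ) : lowf 1 (X i : Poly) := by
  intro m hm
  rw [MvPolynomial.coeff_X'] 
  rw [if_neg]
  rintro rfl
  simp [mdeg_single] at hm

lemma lowf_mul {a b : ℕ} {f g : Poly} (hf : lowf a f) (hg : lowf b g) :
    lowf (a + b) (f * g) := by
  intro m hm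
  rw [coeff_mul]
  apply Finset.sum_eq_zero
  rintro ⟨u, v⟩ huv
  rw [Finset.HasAntidiagonal.mem_antidiagonal] at huv
  have : mdeg u + mdeg v < a + b := by rw [← mdeg_add, huv]; exact hm
  rcases lt_or_ge (mdeg u) a with h | h
  · rw [hf u h, zero_mul]
  · rw [hg v (by omega), mul_zero]

lemma lowf_sub {L : ℕ} {f g : Poly} (hf : lowf L f) (hg : lowf L g) : lowf L (f - g) := by
  intro m hm
  rw [coeff_sub, hf m hm, hg m hm, sub_zero]

lemma lowf_rename {L : ℕ} {f : Poly} (σ : Equiv.Perm ℕ) (hf : lowf L f) :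
    lowf L (rename σ f) := by
  intro m hm
  have hmap : Finsupp.mapDomain (⇑σ) (Finsupp.mapDomain (⇑σ.symm) m) = m := by
    rw [← Finsupp.mapDomain_comp]
    simp [Function.comp_def]
    exact Finsupp.mapDomain_id
  have := coeff_rename_mapDomain (⇑σ) σ.injective f (Finsupp.mapDomain (⇑σ.symm) m)
  rw [hmap] at this
  rw [this]
  apply hf
  have : mdeg (Finsupp.mapDomain (⇑σ.symm) m) = mdeg m := by
    unfold mdeg
    rw [Finsupp.sum_mapDomain_index (fun _ => rfl) (fun _ _ _ => rfl)]
  rw [this]; exact hm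

lemma avoid_rename {j : ℕ} {f : Poly} (σ : Equiv.Perm ℕ) (hf : avoid j f) :
    avoid (σ j) (rename σ f) := by
  intro m hm
  have hmap : Finsupp.mapDomain (⇑σ) (Finsupp.mapDomain (⇑σ.symm) m) = m := by
    rw [← Finsupp.mapDomain_comp]
    simp [Function.comp_def]
    exact Finsupp.mapDomain_id
  have := coeff_rename_mapDomain (⇑σ) σ.injective f (Finsupp.mapDomain (⇑σ.symm) m)
  rw [hmap] at this
  rw [this]
  apply hf
  rw [Finsupp.mapDomain_equiv_apply]
  simpa using hm

lemma avoid_mul {j : ℕ} {f g : Poly} (hf : avoid j f) (hg : avoid j g) : avoid j (f * g) := by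
  intro m hm
  rw [coeff_mul]
  apply Finset.sum_eq_zero
  rintro ⟨u, v⟩ huv
  rw [Finset.HasAntidiagonal.mem_antidiagonal] at huv
  have : u j + v j ≠ 0 := by
    rw [← Finsupp.add_apply, huv]; exact hm
  rcases eq_or_ne (u j) 0 with h | h
  · rw [hg v (by omega), mul_zero]
  · rw [hf u h, zero_mul]

lemma avoid_sub {j : ℕ} {f g : Poly} (hf : avoid j f) (hg : avoid j g) : avoid j (f - g) := by
  intro m hm
  rw [coeff_sub, hf m hm, hg m hm, sub_zero]

lemma avoid_one (j : ℕ) : avoid j (1 : Poly) := by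
  intro m hm
  classical
  rw [coeff_one, if_neg]
  rintro rfl
  simp at hm

lemma avoid_X {i j : ℕ} (h : j ≠ i) : avoid j (X i : Poly) := by
  intro m hm
  rw [MvPolynomial.coeff_X']
  rw [if_neg]
  rintro rfl
  simp [Finsupp.single_apply, Ne.symm h] at hm








lemma coeff_diffX_mul (i : ℕ) (v : Poly) (m : ℕ →₀ ℕ) :
    coeff (m + Finsupp.single i 1) ((X i - X (i+1)) * v)
      = coeff m v - (if m (i+1) = 0 then 0
          else coeff (m + Finsupp.single i 1 - Finsupp.single (i+1) 1) v) := by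
  classical
  rw [sub_mul, coeff_sub]
  congr 1
  · rw [coeff_X_mul']
    have hmem : i ∈ (m + Finsupp.single i 1).support := by
      rw [Finsupp.mem_support_iff]
      simp [Finsupp.add_apply, Finsupp.single_apply]
    rw [if_pos hmem, add_tsub_cancel_right]
  · rw [coeff_X_mul']
    have happ : ((m + Finsupp.single i 1) : ℕ →₀ ℕ) (i+1) = m (i+1) := by
      rw [Finsupp.add_apply, Finsupp.single_apply, if_neg (by omega : ¬ i = i + 1), add_zero]
    rcases eq_or_ne (m (i+1)) 0 with h | h
    · rw [if_neg (by rw [Finsupp.mem_support_iff, happ]; simpa using h), if_pos h]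
    · rw [if_pos (by rw [Finsupp.mem_support_iff, happ]; exact h), if_neg h]

lemma avoid_of_diffX_mul {i j : ℕ} (hji : j ≠ i) (hji1 : j ≠ i+1) {v : Poly}
    (h : avoid j ((X i - X (i+1)) * v)) : avoid j v := by
  classical
  intro m hm
  by_contra hc
  have hne : (v.support.filter (fun m => m j ≠ 0)).Nonempty :=
    ⟨m, by simp [Finset.mem_filter, MvPolynomial.mem_support_iff, hc, hm]⟩
  obtain ⟨m₀, hm₀S, hmax⟩ := Finset.exists_max_image _ (fun m => m i) hne
  rw [Finset.mem_filter, MvPolynomial.mem_support_iff] at hm₀S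
  obtain ⟨hm₀v, hm₀j⟩ := hm₀S
  have hkey := coeff_diffX_mul i v m₀
  have hL : coeff (m₀ + Finsupp.single i 1) ((X i - X (i+1)) * v) = 0 := by
    apply h
    simpa [Finsupp.add_apply, Finsupp.single_apply, Ne.symm hji] using hm₀j
  rw [hL] at hkey
  rcases eq_or_ne (m₀ (i+1)) 0 with h1 | h1
  · rw [if_pos h1] at hkey
    exact hm₀v (by linarith [hkey] )
  · rw [if_neg h1] at hkey
    set m' := m₀ + Finsupp.single i 1 - Finsupp.single (i+1) 1 with hm'
    have hm'j : m' j = m₀ j := by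
      simp [hm', Finsupp.tsub_apply, Finsupp.add_apply, Finsupp.single_apply,
        Ne.symm hji, Ne.symm hji1]
    have hm'i : m' i = m₀ i + 1 := by
      simp [hm', Finsupp.tsub_apply, Finsupp.add_apply, Finsupp.single_apply,
        (by omega : ¬ (i + 1 = i))]
    have hz : coeff m' v = 0 := by
      by_contra hc'
      have : m' ∈ v.support.filter (fun m => m j ≠ 0) := by
        rw [Finset.mem_filter, MvPolynomial.mem_support_iff]
        exact ⟨hc', by rw [hm'j]; exact hm₀j⟩
      have := hmax m' this
      omega
    rw [hz] at hkey
    exact hm₀v (by linarith [hkey])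

lemma lowf_of_diffX_mul {i L : ℕ} {v : Poly}
    (h : lowf (L+1) ((X i - X (i+1)) * v)) : lowf L v := by
  classical
  intro m hm
  by_contra hc
  have hne : (v.support.filter (fun m => mdeg m < L)).Nonempty :=
    ⟨m, by simp [Finset.mem_filter, MvPolynomial.mem_support_iff, hc, hm]⟩
  obtain ⟨m₀, hm₀S, hmin⟩ := Finset.exists_min_image _
      (fun m => mdeg m * (L+1) + (L - m i)) hne
  rw [Finset.mem_filter, MvPolynomial.mem_support_iff] at hm₀S
  obtain ⟨hm₀v, hm₀d⟩ := hm₀S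
  have hkey := coeff_diffX_mul i v m₀
  have hL : coeff (m₀ + Finsupp.single i 1) ((X i - X (i+1)) * v) = 0 := by
    apply h
    rw [mdeg_add, mdeg_single]
    omega
  rw [hL] at hkey
  rcases eq_or_ne (m₀ (i+1)) 0 with h1 | h1
  · rw [if_pos h1] at hkey
    exact hm₀v (by linarith [hkey])
  · rw [if_neg h1] at hkey
    set m' := m₀ + Finsupp.single i 1 - Finsupp.single (i+1) 1 with hm'
    have hsub : m' + Finsupp.single (i+1) 1 = m₀ + Finsupp.single i 1 := by
      rw [hm', tsub_add_cancel_of_le]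
      intro a
      rcases eq_or_ne a (i+1) with rfl | ha
      · simp [Finsupp.add_apply, Finsupp.single_apply, (by omega : ¬ (i = i+1))]
        omega
      · simp [Finsupp.single_apply, Ne.symm ha]
    have hm'd : mdeg m' = mdeg m₀ := by
      have := congrArg mdeg hsub
      rw [mdeg_add, mdeg_add, mdeg_single, mdeg_single] at this
      omega
    have hm'i : m' i = m₀ i + 1 := by
      simp [hm', Finsupp.tsub_apply, Finsupp.add_apply, Finsupp.single_apply,
        (by omega : ¬ (i + 1 = i))]
    have hiL : m₀ i < L := by
      have h2 : m₀ i ≤ mdeg m₀ := by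
        rcases eq_or_ne (m₀ i) 0 with h0 | h0
        · simp [h0]
        · exact Finset.single_le_sum (f := fun j => m₀ j) (fun j _ => Nat.zero_le _)
            (Finsupp.mem_support_iff.mpr h0)
      omega
    have hz : coeff m' v = 0 := by
      by_contra hc'
      have hmem : m' ∈ v.support.filter (fun m => mdeg m < L) := by
        rw [Finset.mem_filter, MvPolynomial.mem_support_iff]
        exact ⟨hc', by omega⟩
      have := hmin m' hmem
      rw [hm'd] at this
      omega
    rw [hz] at hkey
    exact hm₀v (by linarith [hkey])




def Inv (w : Equiv.Perm ℕ) : Set (ℕ × ℕ) := {p : ℕ × ℕ | p.1 < p.2 ∧ w p.2 < w p.1}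

lemma mem_Inv {w : Equiv.Perm ℕ} {a b : ℕ} : (a, b) ∈ Inv w ↔ a < b ∧ w b < w a :=
  Iff.rfl

lemma len_eq (w : Equiv.Perm ℕ) : len w = (Inv w).ncard := rfl

lemma maps_below {w : Equiv.Perm ℕ} {N : ℕ} (hN : ∀ j, N ≤ j → w j = j) :
    ∀ a, a < N → w a < N := by
  intro a ha
  by_contra h
  push_neg at h
  have h2 := hN _ h
  have := w.injective h2
  omega

lemma inv_subset {w : Equiv.Perm ℕ} {N : ℕ} (hN : ∀ j, N ≤ j → w j = j) :
    Inv w ⊆ ↑((Finset.range N) ×ˢ (Finset.range N)) := by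
  rintro ⟨a, b⟩ hp
  rw [mem_Inv] at hp
  obtain ⟨hab, hw⟩ := hp
  simp only [Finset.coe_product, Set.mem_prod, Finset.mem_coe, Finset.mem_range]
  have hbN : b < N := by
    by_contra h
    push_neg at h
    rw [hN b h] at hw
    have haN : a < N := by
      by_contra h'
      push_neg at h'
      rw [hN a h'] at hw
      omega
    have := maps_below hN a haN
    omega
  exact ⟨lt_trans hab hbN, hbN⟩

lemma inv_finite {w : Equiv.Perm ℕ} {N : ℕ} (hN : ∀ j, N ≤ j → w j = j) :
    (Inv w).Finite :=
  Set.Finite.subset (Finset.finite_toSet _) (inv_subset hN)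

lemma swap_lt {i c d : ℕ} (h : c < d) (hne : ¬(c = i ∧ d = i+1)) :
    Equiv.swap i (i+1) c < Equiv.swap i (i+1) d := by
  rw [Equiv.swap_apply_def, Equiv.swap_apply_def]
  split_ifs <;> omega

lemma descent_len {w : Equiv.Perm ℕ} {i N : ℕ} (hN : ∀ j, N ≤ j → w j = j)
    (hdesc : w (i+1) < w i) : len (w * Equiv.swap i (i+1)) + 1 = len w := by
  set s := Equiv.swap i (i+1) with hs
  have hss : ∀ x, s (s x) = x := fun x => Equiv.swap_apply_self i (i+1) x
  have hNs : ∀ j, max N (i+2) ≤ j → (w * s) j = j := by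
    intro j hj
    have h1 : s j = j := by
      rw [hs]; apply Equiv.swap_apply_of_ne_of_ne <;> omega
    rw [Equiv.Perm.mul_apply, h1]
    exact hN j (le_trans (le_max_left _ _) hj)
  have hfin : (Inv w).Finite := inv_finite hN
  have hmem : (i, i+1) ∈ Inv w := mem_Inv.mpr ⟨Nat.lt_succ_self i, hdesc⟩
  have hkey : Inv (w * s) = (fun p : ℕ × ℕ => (s p.1, s p.2)) '' (Inv w \ {(i, i+1)}) := by
    ext ⟨c, d⟩
    simp only [Set.mem_image, Set.mem_diff, Set.mem_singleton_iff, Prod.exists]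
    constructor
    · intro hp
      rw [mem_Inv] at hp
      obtain ⟨hcd, hw⟩ := hp
      simp only [Equiv.Perm.mul_apply] at hw
      have hne : ¬(c = i ∧ d = i+1) := by
        rintro ⟨rfl, rfl⟩
        rw [hs, Equiv.swap_apply_left, Equiv.swap_apply_right] at hw
        omega
      refine ⟨s c, s d, ⟨mem_Inv.mpr ⟨swap_lt hcd hne, hw⟩, ?_⟩, ?_⟩
      · rw [Prod.mk.injEq, not_and]
        intro hc hd
        have hc' : c = s i := by rw [← hc, hss]
        rw [hs, Equiv.swap_apply_left] at hc'
        have hd' : d = s (i+1) := by rw [← hd, hss]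
        rw [hs, Equiv.swap_apply_right] at hd'
        omega
      · rw [Prod.mk.injEq]
        exact ⟨hss c, hss d⟩
    · rintro ⟨a, b, ⟨hab', hne⟩, heq⟩
      rw [mem_Inv] at hab'
      obtain ⟨hab, hw⟩ := hab'
      rw [Prod.mk.injEq] at heq
      obtain ⟨hc, hd⟩ := heq
      subst hc; subst hd
      rw [mem_Inv]
      constructor
      · apply swap_lt hab
        rintro ⟨rfl, rfl⟩
        exact hne rfl
      · simp only [Equiv.Perm.mul_apply, hss]
        exact hw
  have hinj : Set.InjOn (fun p : ℕ × ℕ => (s p.1, s p.2)) (Inv w \ {(i, i+1)}) := by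
    rintro ⟨a, b⟩ _ ⟨a', b'⟩ _ heq
    simp only [Prod.mk.injEq] at heq ⊢
    exact ⟨s.injective heq.1, s.injective heq.2⟩
  rw [len_eq, len_eq, hkey, Set.ncard_image_of_injOn hinj]
  exact Set.ncard_diff_singleton_add_one hmem hfin

lemma ascent_len {w : Equiv.Perm ℕ} {i N : ℕ} (hN : ∀ j, N ≤ j → w j = j)
    (hasc : w i < w (i+1)) : len (w * Equiv.swap i (i+1)) = len w + 1 := by
  set s := Equiv.swap i (i+1) with hs
  have hNs : ∀ j, max N (i+2) ≤ j → (w * s) j = j := by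
    intro j hj
    have h1 : s j = j := by
      rw [hs]; apply Equiv.swap_apply_of_ne_of_ne <;> omega
    rw [Equiv.Perm.mul_apply, h1]
    exact hN j (le_trans (le_max_left _ _) hj)
  have hdesc : (w * s) (i+1) < (w * s) i := by
    simp only [Equiv.Perm.mul_apply, hs, Equiv.swap_apply_left, Equiv.swap_apply_right]
    exact hasc
  have h2 := descent_len hNs hdesc
  rw [mul_assoc, Equiv.swap_mul_self, mul_one] at h2
  omega

lemma len_le_sum {w : Equiv.Perm ℕ} {n : ℕ} (hN : ∀ j, n < j → w j = j) (h0 : w 0 = 0) :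
    len w ≤ ∑ a ∈ Finset.Icc 1 (n-1), (n - a) := by
  classical
  set T := ((Finset.Icc 1 (n-1)).biUnion
      (fun a => (Finset.Icc (a+1) n).image (fun b => (a, b)))) with hT
  have hsub : Inv w ⊆ ↑T := by
    rintro ⟨a, b⟩ hp
    rw [mem_Inv] at hp
    obtain ⟨hab, hw⟩ := hp
    have hN' : ∀ j, n + 1 ≤ j → w j = j := fun j hj => hN j (by omega)
    have hbn : b < n + 1 := by
      have h3 := inv_subset hN' (mem_Inv.mpr ⟨hab, hw⟩)
      simp only [Finset.coe_product, Set.mem_prod, Finset.mem_coe, Finset.mem_range] at h3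
      exact h3.2
    have ha1 : 1 ≤ a := by
      rcases Nat.eq_zero_or_pos a with rfl | h
      · rw [h0] at hw; omega
      · exact h
    rw [Finset.mem_coe, hT, Finset.mem_biUnion]
    refine ⟨a, Finset.mem_Icc.mpr (by omega), ?_⟩
    rw [Finset.mem_image]
    exact ⟨b, Finset.mem_Icc.mpr (by omega), rfl⟩
  have h1 : len w ≤ T.card := by
    rw [len_eq]
    have := Set.ncard_le_ncard hsub (Finset.finite_toSet _)
    rwa [Set.ncard_coe_finset] at this
  refine le_trans h1 (le_trans Finset.card_biUnion_le ?_)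
  apply Finset.sum_le_sum
  intro a _
  refine le_trans Finset.card_image_le ?_
  rw [Nat.card_Icc]
  omega

lemma cyc_self (a : ℕ) : cyc a a = 1 := by
  unfold cyc
  simp

lemma cyc_succ {a b : ℕ} (h : a ≤ b) : cyc a (b+1) = cyc a b * Equiv.swap b (b+1) := by
  unfold cyc
  have h2 : b + 1 - a = (b - a) + 1 := by omega
  rw [h2, List.range_succ, List.map_append, List.prod_append]
  simp only [List.map_cons, List.map_nil, List.prod_cons, List.prod_nil, mul_one]
  congr 2 <;> omega

lemma cyc_apply {a b : ℕ} (h : a ≤ b) : ∀ x : ℕ,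
    cyc a b x = if x < a then x else if x < b then x + 1 else if x = b then a else x := by
  induction b, h using Nat.le_induction with
  | base =>
    intro x
    rw [cyc_self]
    simp only [Equiv.Perm.one_apply]
    split_ifs <;> omega
  | succ b hab ih =>
    intro x
    rw [cyc_succ hab, Equiv.Perm.mul_apply]
    rcases lt_trichotomy x b with hx | rfl | hx
    · have hsx : Equiv.swap b (b+1) x = x := by
        apply Equiv.swap_apply_of_ne_of_ne <;> omega
      rw [hsx, ih x]
      split_ifs <;> omega
    · rw [Equiv.swap_apply_left, ih (x+1)]
      split_ifs <;> omega
    · rcases eq_or_ne x (b+1) with rfl | hne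
      · rw [Equiv.swap_apply_right, ih b]
        split_ifs <;> omega
      · have hsx : Equiv.swap b (b+1) x = x := by
          apply Equiv.swap_apply_of_ne_of_ne <;> omega
        rw [hsx, ih x]
        split_ifs <;> omega

lemma cyc_mul_swap {m k : ℕ} (h : m ≤ k) :
    cyc m (k+1) * Equiv.swap k (k+1) = cyc m k := by
  rw [cyc_succ h, mul_assoc, Equiv.swap_mul_self, mul_one]

lemma lowf_pow (i d : ℕ) : lowf d ((X i : Poly) ^ d) := by
  induction d with
  | zero => exact lowf_anything _
  | succ d ih =>
    rw [pow_succ]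
    intro m hm
    apply lowf_mul ih (lowf_X i)
    omega

lemma lowf_prod (s : Finset ℕ) (d : ℕ → ℕ) :
    lowf (∑ i ∈ s, d i) (∏ i ∈ s, (X i : Poly) ^ d i) := by
  classical
  induction s using Finset.induction with
  | empty =>
    simp only [Finset.sum_empty, Finset.prod_empty]
    exact lowf_anything _
  | insert a s hni ih =>
    rw [Finset.sum_insert hni, Finset.prod_insert hni]
    exact lowf_mul (lowf_pow a (d a)) ih

lemma avoid_pow {i j : ℕ} (d : ℕ) (h : j ≠ i) : avoid j ((X i : Poly) ^ d) := by
  induction d with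
  | zero => exact avoid_one j
  | succ d ih =>
    rw [pow_succ]
    exact avoid_mul ih (avoid_X h)

lemma avoid_prod {j : ℕ} (s : Finset ℕ) (d : ℕ → ℕ) (h : ∀ i ∈ s, j ≠ i) :
    avoid j (∏ i ∈ s, (X i : Poly) ^ d i) := by
  classical
  induction s using Finset.induction with
  | empty =>
    simp only [Finset.prod_empty]
    exact avoid_one j
  | insert a s hni ih =>
    rw [Finset.prod_insert hni]
    exact avoid_mul (avoid_pow _ (h a (Finset.mem_insert_self a s)))
      (ih (fun i hi => h i (Finset.mem_insert_of_mem hi)))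

inductive Reach : Equiv.Perm ℕ → Prop
  | top (n : ℕ) (hn : 1 ≤ n) (w : Equiv.Perm ℕ)
      (h1 : ∀ i, 1 ≤ i → i ≤ n → w i = n + 1 - i) (h2 : ∀ i, n < i → w i = i)
      (h0 : w 0 = 0) : Reach w
  | step (w : Equiv.Perm ℕ) (i : ℕ) (hi : 1 ≤ i)
      (hlen : len (w * Equiv.swap i (i+1)) + 1 = len w) (hw : Reach w) :
      Reach (w * Equiv.swap i (i+1))

lemma reach_top_of_no_ascent (N : ℕ) (w : Equiv.Perm ℕ) (h0 : w 0 = 0)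
    (hN : ∀ j, N < j → w j = j)
    (hasc : ∀ i, 1 ≤ i → i + 1 ≤ N → ¬ w i < w (i+1)) : Reach w := by
  rcases Nat.eq_zero_or_pos N with rfl | hNpos
  · refine Reach.top 1 le_rfl w ?_ ?_ h0
    · intro i hi1 hi2
      have hi : i = 1 := by omega
      subst hi
      rw [hN 1 (by omega)]
    · intro i hi
      exact hN i (by omega)
  · have hdec : ∀ i, 1 ≤ i → i + 1 ≤ N → w (i+1) < w i := by
      intro i hi1 hi2
      have hne : w i ≠ w (i+1) := fun h => by
        have := w.injective h; omega
      have := hasc i hi1 hi2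
      omega
    have hchain : ∀ t, ∀ a, 1 ≤ a → a + t ≤ N → w (a + t) + t ≤ w a := by
      intro t
      induction t with
      | zero => intro a _ _; simp
      | succ t ih =>
        intro a ha1 haN
        have h1 := ih (a+1) (by omega) (by omega)
        have h2 := hdec a ha1 (by omega)
        have heq : a + 1 + t = a + (t+1) := by omega
        rw [heq] at h1
        omega
    have hrange : ∀ a, 1 ≤ a → a ≤ N → 1 ≤ w a ∧ w a ≤ N := by
      intro a ha1 haN
      constructor
      · rcases Nat.eq_zero_or_pos (w a) with h | h
        · exfalso
          have h2 : w a = w 0 := by rw [h0, h]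
          have := w.injective h2
          omega
        · exact h
      · by_contra h
        push_neg at h
        have h2 := hN (w a) h
        have := w.injective (by rw [h2] : w (w a) = w a)
        omega
    have hval : ∀ i, 1 ≤ i → i ≤ N → w i = N + 1 - i := by
      intro i hi1 hiN
      have h1 : w i + (i - 1) ≤ w 1 := by
        have h2 := hchain (i-1) 1 le_rfl (by omega)
        have heq : 1 + (i - 1) = i := by omega
        rw [heq] at h2
        omega
      have h2 : w N + (N - i) ≤ w i := by
        have h3 := hchain (N-i) i hi1 (by omega)
        have heq : i + (N - i) = N := by omega
        rw [heq] at h3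
        omega
      have h3 := hrange 1 le_rfl (by omega)
      have h4 := hrange N (by omega) le_rfl
      omega
    exact Reach.top N hNpos w hval hN h0

/-- every permutation fixing `0` and everything above `N` is reachable -/
lemma reach_of_support (N : ℕ) :
    ∀ (d : ℕ) (w : Equiv.Perm ℕ), w 0 = 0 → (∀ j, N < j → w j = j) →
      (∑ a ∈ Finset.Icc 1 (N-1), (N - a)) - len w ≤ d → Reach w := by
  intro d
  induction d with
  | zero =>
    intro w h0 hN hd
    by_cases hasc : ∃ i, 1 ≤ i ∧ i + 1 ≤ N ∧ w i < w (i+1)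
    · obtain ⟨i, hi1, hiN, hasc'⟩ := hasc
      exfalso
      have hsupp : ∀ j, N + 1 ≤ j → w j = j := fun j hj => hN j (by omega)
      have h1 := ascent_len hsupp hasc'
      have hb : len (w * Equiv.swap i (i+1)) ≤ ∑ a ∈ Finset.Icc 1 (N-1), (N - a) := by
        apply len_le_sum (n := N)
        · intro j hj
          rw [Equiv.Perm.mul_apply, Equiv.swap_apply_of_ne_of_ne (by omega) (by omega)]
          exact hN j hj
        · rw [Equiv.Perm.mul_apply, Equiv.swap_apply_of_ne_of_ne (by omega) (by omega)]
          exact h0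
      omega
    · push_neg at hasc
      exact reach_top_of_no_ascent N w h0 hN (fun i h1 h2 => by
        have := hasc i h1 h2; omega)
  | succ d ih =>
    intro w h0 hN hd
    by_cases hasc : ∃ i, 1 ≤ i ∧ i + 1 ≤ N ∧ w i < w (i+1)
    · obtain ⟨i, hi1, hiN, hasc'⟩ := hasc
      have hsupp : ∀ j, N + 1 ≤ j → w j = j := fun j hj => hN j (by omega)
      have h1 := ascent_len hsupp hasc'
      set w' := w * Equiv.swap i (i+1) with hw'
      have h0' : w' 0 = 0 := by
        rw [hw', Equiv.Perm.mul_apply, Equiv.swap_apply_of_ne_of_ne (by omega) (by omega)]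
        exact h0
      have hN' : ∀ j, N < j → w' j = j := by
        intro j hj
        rw [hw', Equiv.Perm.mul_apply, Equiv.swap_apply_of_ne_of_ne (by omega) (by omega)]
        exact hN j hj
      have hreach' : Reach w' := ih w' h0' hN' (by omega)
      have heq : w = w' * Equiv.swap i (i+1) := by
        rw [hw', mul_assoc, Equiv.swap_mul_self, mul_one]
      rw [heq]
      apply Reach.step w' i hi1 _ hreach'
      rw [← heq]
      omega
    · push_neg at hasc
      exact reach_top_of_no_ascent N w h0 hN (fun i h1 h2 => by
        have := hasc i h1 h2; omega)

lemma reach_lowf_avoid (G : Equiv.Perm ℕ → Poly) (D : ℕ → Poly → Poly)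
    (hTop : ∀ n, 1 ≤ n → ∀ w : Equiv.Perm ℕ,
      (∀ i, 1 ≤ i → i ≤ n → w i = n + 1 - i) → (∀ i, n < i → w i = i) → w 0 = 0 →
      G w = ∏ i ∈ Finset.Icc 1 (n-1), X i ^ (n - i))
    (hD : ∀ i f, (X i - X (i+1)) * D i f = f - MvPolynomial.rename (Equiv.swap i (i+1)) f)
    (hRec : ∀ (w : Equiv.Perm ℕ) (i : ℕ), 1 ≤ i →
        len (w * Equiv.swap i (i+1)) + 1 = len w →
        G (w * Equiv.swap i (i+1)) = D i ((1 - X (i+1)) * G w)) :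
    ∀ w : Equiv.Perm ℕ, Reach w → lowf (len w) (G w) ∧ avoid 0 (G w) := by
  intro w hw
  induction hw with
  | top n hn w h1 h2 h0 =>
    rw [hTop n hn w h1 h2 h0]
    constructor
    · have hlen : len w ≤ ∑ i ∈ Finset.Icc 1 (n-1), (n - i) := len_le_sum h2 h0
      exact lowf_mono hlen (lowf_prod _ _)
    · apply avoid_prod
      intro i hi
      rw [Finset.mem_Icc] at hi
      omega
  | step w i hi hlen hw ih =>
    rw [hRec w i hi hlen]
    set g := (1 - X (i+1)) * G w with hg
    have hDg := hD i g
    have hlow : lowf (len w) (g - rename (⇑(Equiv.swap i (i+1))) g) := by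
      have hlg : lowf (len w) g := by
        have := lowf_mul (lowf_anything (1 - X (i+1))) ih.1
        rwa [zero_add] at this
      exact lowf_sub hlg (lowf_rename _ hlg)
    have havoid : avoid 0 (g - rename (⇑(Equiv.swap i (i+1))) g) := by
      have hag : avoid 0 g := by
        apply avoid_mul _ ih.2
        exact avoid_sub (avoid_one 0) (avoid_X (by omega))
      refine avoid_sub hag ?_
      have := avoid_rename (Equiv.swap i (i+1)) hag
      rwa [Equiv.swap_apply_of_ne_of_ne (by omega) (by omega)] at this
    constructor
    · apply lowf_of_diffX_mul (i := i)
      rw [hDg]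
      have heq : len (w * Equiv.swap i (i+1)) + 1 = len w := hlen
      rw [heq]
      exact hlow
    · apply avoid_of_diffX_mul (i := i) (j := 0) (by omega) (by omega)
      rw [hDg]
      exact havoid

lemma avoid_add {j : ℕ} {f g : Poly} (hf : avoid j f) (hg : avoid j g) : avoid j (f + g) := by
  intro m hm
  rw [coeff_add, hf m hm, hg m hm, add_zero]

def Fp : ℕ → ℕ → Poly
  | _, 0 => 1
  | 0, _+1 => 0
  | (k+1), (p+1) => Fp k (p+1) + X (k+1) * Fp k p - X (k+1) * Fp k (p+1)

lemma Fp_zero (k : ℕ) : Fp k 0 = 1 := by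
  cases k <;> rfl

lemma Fp_zero' (p : ℕ) : Fp 0 (p+1) = 0 := rfl

lemma Fp_rec (k p : ℕ) :
    Fp (k+1) (p+1) = Fp k (p+1) + X (k+1) * Fp k p - X (k+1) * Fp k (p+1) := rfl

lemma Fp_gt : ∀ k p, k < p → Fp k p = 0 := by
  intro k
  induction k with
  | zero =>
    intro p hp
    cases p with
    | zero => omega
    | succ p => rfl
  | succ k ih =>
    intro p hp
    cases p with
    | zero => omega
    | succ p =>
      rw [Fp_rec, ih (p+1) (by omega), ih p (by omega)]
      ring

lemma Fp_avoid : ∀ k p j, (j = 0 ∨ k < j) → avoid j (Fp k p) := by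
  intro k
  induction k with
  | zero =>
    intro p j hj
    cases p with
    | zero => exact avoid_one j
    | succ p => exact fun m _ => rfl
  | succ k ih =>
    intro p j hj
    cases p with
    | zero => rw [Fp_zero]; exact avoid_one j
    | succ p =>
      rw [Fp_rec]
      have hj' : j = 0 ∨ k < j := by omega
      have hjX : j ≠ k + 1 := by omega
      exact avoid_sub (avoid_add (ih (p+1) j hj') (avoid_mul (avoid_X hjX) (ih p j hj')))
        (avoid_mul (avoid_X hjX) (ih (p+1) j hj'))

/-- substitute 0 for the variables with index in `[a, b]` -/
def sz (a b : ℕ) : Poly →+* Poly :=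
  eval₂Hom C (fun i => if a ≤ i ∧ i ≤ b then 0 else X i)

lemma eval₂_congr_avoid (f : Poly) (g₁ g₂ : ℕ → Poly)
    (h : ∀ i, g₁ i = g₂ i ∨ avoid i f) : eval₂ C g₁ f = eval₂ C g₂ f := by
  rw [eval₂_eq, eval₂_eq]
  apply Finset.sum_congr rfl
  intro d hd
  congr 1
  apply Finset.prod_congr rfl
  intro i hi
  rcases h i with h' | h'
  · rw [h']
  · exfalso
    rw [MvPolynomial.mem_support_iff] at hd
    exact hd (h' d (Finsupp.mem_support_iff.mp hi))

lemma sz_gt {a b : ℕ} (h : b < a) (f : Poly) : sz a b f = f := by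
  show eval₂ C _ f = f
  have hg : (fun i => if a ≤ i ∧ i ≤ b then (0 : Poly) else X i) = X := by
    funext i
    rw [if_neg (by omega)]
  rw [hg, eval₂_eta]

lemma sz_Fp : ∀ K, ∀ p a b, 1 ≤ a → K ≤ b → sz a b (Fp K p) = Fp (min K (a-1)) p := by
  intro K
  induction K with
  | zero =>
    intro p a b _ _
    cases p with
    | zero => rw [Fp_zero, map_one, Nat.zero_min, Fp_zero]
    | succ p => rw [Fp_zero', map_zero, Nat.zero_min, Fp_zero']
  | succ K ih =>
    intro p a b ha hb
    cases p with
    | zero => rw [Fp_zero, map_one, Fp_zero]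
    | succ p =>
      rw [Fp_rec, map_sub, map_add, map_mul, map_mul]
      have hX : sz a b (X (K+1)) = if a ≤ K+1 ∧ K+1 ≤ b then 0 else X (K+1) :=
        eval₂Hom_X' _ _ _
      by_cases hcase : a ≤ K + 1
      · rw [hX, if_pos ⟨hcase, hb⟩]
        rw [ih (p+1) a b ha (by omega)]
        have hmin1 : min K (a-1) = a - 1 := by omega
        have hmin2 : min (K+1) (a-1) = a - 1 := by omega
        rw [hmin1, hmin2]
        ring
      · rw [hX, if_neg (by omega)]
        rw [ih (p+1) a b ha (by omega), ih p a b ha (by omega)]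
        have hmin1 : min K (a-1) = K := by omega
        have hmin2 : min (K+1) (a-1) = K + 1 := by omega
        rw [hmin1, hmin2, Fp_rec]

lemma rename_swap_of_adj (f : Poly) (k : ℕ)
    (hadj : ∀ t, 1 ≤ t → t + 1 ≤ k → rename (⇑(Equiv.swap t (t+1))) f = f) :
    ∀ b a, 1 ≤ a → a ≤ b → b ≤ k → rename (⇑(Equiv.swap a b)) f = f := by
  intro b
  induction b with
  | zero =>
    intro a ha hab _
    omega
  | succ b ih =>
    intro a ha hab hbk
    rcases eq_or_lt_of_le hab with rfl | hlt
    · rw [Equiv.swap_self]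
      show rename (⇑(Equiv.refl ℕ)) f = f
      rw [Equiv.coe_refl, rename_id, AlgHom.id_apply]
    · rcases eq_or_lt_of_le (Nat.succ_le_of_lt hlt) with heq | hlt2
      · -- b + 1 = a + 1, i.e. a = b
        have : a = b := by omega
        subst this
        exact hadj a ha hbk
      · -- a < b
        have hab' : a < b := by omega
        set σ := Equiv.swap b (b+1) with hσ
        have hσa : σ a = a := Equiv.swap_apply_of_ne_of_ne (by omega) (by omega)
        have hσb : σ b = b + 1 := Equiv.swap_apply_left _ _
        have hconj : Equiv.swap a (b+1) = σ * Equiv.swap a b * σ := by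
          have h1 := Equiv.swap_apply_apply σ a b
          rw [hσa, hσb, (show σ⁻¹ = σ from Equiv.swap_inv b (b+1))] at h1
          exact h1
        rw [hconj]
        have hcoe : ⇑(σ * Equiv.swap a b * σ) = ⇑σ ∘ ⇑(Equiv.swap a b) ∘ ⇑σ := by
          funext x
          simp [Equiv.Perm.coe_mul]
        rw [hcoe, ← Function.comp_assoc, ← rename_rename, ← rename_rename]
        rw [hadj b (by omega) (by omega), ih a ha (by omega) (by omega),
          hadj b (by omega) (by omega)]

lemma avoid_of_shift_inv (f : Poly) (k : ℕ)
    (hinv : ∀ j, k < j → rename (⇑(Equiv.swap j (j+1))) f = f) :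
    ∀ j, k < j → avoid j f := by
  intro j hj m hm
  by_contra hc
  set M := f.support.sup (fun m => m.support.sup id) with hM
  have key : ∀ d : ℕ, ∃ m' ∈ f.support, m' (j + d) ≠ 0 := by
    intro d
    induction d with
    | zero => exact ⟨m, MvPolynomial.mem_support_iff.mpr hc, hm⟩
    | succ d ih =>
      obtain ⟨m', hm's, hm'⟩ := ih
      set t := j + d with ht'
      have ht : k < t := by omega
      refine ⟨Finsupp.mapDomain (⇑(Equiv.swap t (t+1))) m', ?_, ?_⟩
      · rw [MvPolynomial.mem_support_iff]
        have h2 := coeff_rename_mapDomain (⇑(Equiv.swap t (t+1)))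
          (Equiv.injective _) f m'
        rw [hinv t ht] at h2
        rw [h2]
        exact MvPolynomial.mem_support_iff.mp hm's
      · have heq : j + (d + 1) = t + 1 := by omega
        rw [heq, Finsupp.mapDomain_equiv_apply, Equiv.symm_swap, Equiv.swap_apply_right]
        exact hm'
  obtain ⟨m', hm's, hne⟩ := key (M + 1)
  have h0 : j + (M+1) ∈ m'.support := Finsupp.mem_support_iff.mpr hne
  have h1 : j + (M+1) ≤ m'.support.sup id := Finset.le_sup (f := id) h0
  have h2 : m'.support.sup id ≤ M := by
    rw [hM]
    exact Finset.le_sup (f := fun m => m.support.sup id) hm's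
  omega

lemma mdeg_zero : mdeg (0 : ℕ →₀ ℕ) = 0 := Finsupp.sum_zero_index

lemma X_sub_ne (i : ℕ) : (X i - X (i+1) : Poly) ≠ 0 := by
  intro h
  have h2 := MvPolynomial.X_injective (R := ℤ) (σ := ℕ) (sub_eq_zero.mp h)
  omega

lemma main_formula (G : Equiv.Perm ℕ → Poly) (D : ℕ → Poly → Poly)
    (hTop : ∀ n, 1 ≤ n → ∀ w : Equiv.Perm ℕ,
      (∀ i, 1 ≤ i → i ≤ n → w i = n + 1 - i) → (∀ i, n < i → w i = i) → w 0 = 0 →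
      G w = ∏ i ∈ Finset.Icc 1 (n-1), X i ^ (n - i))
    (hD : ∀ i f, (X i - X (i+1)) * D i f = f - MvPolynomial.rename (Equiv.swap i (i+1)) f)
    (hRec : ∀ (w : Equiv.Perm ℕ) (i : ℕ), 1 ≤ i →
        len (w * Equiv.swap i (i+1)) + 1 = len w →
        G (w * Equiv.swap i (i+1)) = D i ((1 - X (i+1)) * G w)) :
    ∀ k p, p ≤ k → G (cyc (k - p + 1) (k+1)) = Fp k p := by
  intro k
  induction k using Nat.strong_induction_on with
  | _ k IH =>
  intro p hpk
  rcases Nat.eq_zero_or_pos p with rfl | hp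
  · -- p = 0
    rw [Nat.sub_zero, cyc_self, Fp_zero]
    have hone := hTop 1 le_rfl 1 ?_ ?_ ?_
    · rw [hone]
      have hempty : Finset.Icc 1 (1-1) = (∅ : Finset ℕ) := by
        apply Finset.Icc_eq_empty
        omega
      rw [hempty, Finset.prod_empty]
    · intro i hi1 hi2
      have hi : i = 1 := by omega
      subst hi
      rfl
    · intro i _
      rfl
    · rfl
  · -- 1 ≤ p ≤ k
    obtain ⟨p', rfl⟩ : ∃ p', p = p' + 1 := ⟨p - 1, by omega⟩
    have hk1 : 1 ≤ k := le_trans hp hpk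
    set m := k - (p' + 1) + 1 with hm
    have hm1 : 1 ≤ m := by omega
    have hmk : m ≤ k := by omega
    set c := cyc m (k+1) with hc
    have capp : ∀ x, c x = if x < m then x else if x < k+1 then x + 1
        else if x = k+1 then m else x := cyc_apply (by omega)
    set f := G c with hf
    have h0c : c 0 = 0 := by rw [capp 0]; rw [if_pos]; omega
    have hNc : ∀ j, k + 1 < j → c j = j := by
      intro j hj
      rw [capp j, if_neg (by omega), if_neg (by omega), if_neg (by omega)]
    have hNc2 : ∀ j, k + 2 ≤ j → c j = j := fun j hj => hNc j (by omega)
    have hreach : Reach c :=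
      reach_of_support (k+1) (∑ a ∈ Finset.Icc 1 (k+1-1), (k+1 - a)) c h0c hNc
        (Nat.sub_le _ _)
    obtain ⟨hlowf, havoid0⟩ := reach_lowf_avoid G D hTop hD hRec c hreach
    have hck : c k = k + 1 := by
      rw [capp k]
      split_ifs <;> omega
    have hck1 : c (k+1) = m := by
      rw [capp (k+1)]
      split_ifs <;> omega
    have hmemInv : (k, k+1) ∈ Inv c := by
      rw [mem_Inv, hck, hck1]
      exact ⟨by omega, by omega⟩
    have hfin : (Inv c).Finite := inv_finite hNc2
    have hlen1 : 1 ≤ len c := by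
      rw [len_eq]
      have := (Set.ncard_pos hfin).mpr ⟨_, hmemInv⟩
      omega
    have hconst : coeff 0 f = 0 := hlowf 0 (by rw [mdeg_zero]; omega)
    -- invariance under s_i for i ≠ k
    have hinv : ∀ i, 1 ≤ i → i ≠ k → rename (⇑(Equiv.swap i (i+1))) f = f := by
      intro i hi hik
      have hasc : c i < c (i+1) := by
        rw [capp i, capp (i+1)]
        split_ifs <;> omega
      set w' := c * Equiv.swap i (i+1) with hw'
      have hw'c : w' * Equiv.swap i (i+1) = c := by
        rw [hw', mul_assoc, Equiv.swap_mul_self, mul_one]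
      have hlen' : len w' = len c + 1 := ascent_len hNc2 hasc
      have hlencond : len (w' * Equiv.swap i (i+1)) + 1 = len w' := by
        rw [hw'c]; omega
      have hstep := hRec w' i hi hlencond
      rw [hw'c] at hstep
      set g' := (1 - X (i+1)) * G w' with hg'
      have hDf := hD i g'
      rw [← hstep] at hDf
      have happ := congrArg (rename (⇑(Equiv.swap i (i+1)))) hDf
      rw [map_mul, map_sub, map_sub] at happ
      rw [rename_X, rename_X, Equiv.swap_apply_left, Equiv.swap_apply_right] at happ
      have hss : rename (⇑(Equiv.swap i (i+1)))
          (rename (⇑(Equiv.swap i (i+1))) g') = g' := by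
        rw [rename_rename]
        have hid : ⇑(Equiv.swap i (i+1)) ∘ ⇑(Equiv.swap i (i+1)) = id :=
          funext (Equiv.swap_apply_self i (i+1))
        rw [hid, rename_id, AlgHom.id_apply]
      rw [hss] at happ
      apply mul_left_cancel₀ (X_sub_ne i)
      linear_combination -happ - hDf
    have havoidhigh : ∀ j, k < j → avoid j f :=
      avoid_of_shift_inv f k (fun j hj => hinv j (by omega) (by omega))
    -- descent step at k
    have hdesc : c (k+1) < c k := by
      rw [hck, hck1]
      omega
    have hlenk : len (c * Equiv.swap k (k+1)) + 1 = len c := descent_len hNc2 hdesc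
    have hstepk := hRec c k hk1 hlenk
    have hcs : c * Equiv.swap k (k+1) = cyc m k := cyc_mul_swap hmk
    have hB : G (cyc m k) = Fp (k-1) p' := by
      have hIH := IH (k-1) (by omega) p' (by omega)
      have he1 : k - 1 - p' + 1 = m := by omega
      have he2 : k - 1 + 1 = k := by omega
      rw [he1, he2] at hIH
      exact hIH
    have hDval : D k ((1 - X (k+1)) * f) = Fp (k-1) p' := by
      rw [← hstepk, hcs, hB]
    have hDk := hD k ((1 - X (k+1)) * f)
    rw [hDval] at hDk
    have hrwren : rename (⇑(Equiv.swap k (k+1))) ((1 - X (k+1)) * f)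
        = (1 - X k) * rename (⇑(Equiv.swap k (k+1))) f := by
      rw [map_mul, map_sub, map_one, rename_X, Equiv.swap_apply_right]
    rw [hrwren] at hDk
    -- hDk : (X k - X (k+1)) * Fp (k-1) p'
    --     = (1 - X (k+1)) * f - (1 - X k) * rename (swap k (k+1)) f
    set gdown : ℕ → ℕ → Poly := fun a i => if a ≤ i ∧ i ≤ k then 0 else X i with hgdown
    have hgdtop : eval₂ C (gdown (k+1)) f = f := by
      have hgX : gdown (k+1) = X := by
        funext i
        simp only [hgdown]
        rw [if_neg (by omega)]
      rw [hgX, eval₂_eta]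
    have hREC : ∀ j, 1 ≤ j → j ≤ k →
        X j * Fp (j-1) p' = eval₂ C (gdown (j+1)) f
          - (1 - X j) * eval₂ C (gdown j) f := by
      intro j hj1 hjk
      set gr : ℕ → Poly := fun i =>
        if j ≤ i ∧ i ≤ k - 1 then 0 else if i = k then X j
        else if i = k+1 then 0 else X i with hgr
      set Θ : Poly →+* Poly := eval₂Hom C gr with hΘ
      have hΘapp : ∀ q : Poly, Θ q = eval₂ C gr q := by
        intro q
        rw [hΘ]
        rw [show ⇑(eval₂Hom C gr) = eval₂ C gr from coe_eval₂Hom _ _]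
      have hXk : Θ (X k) = X j := by
        rw [hΘ, eval₂Hom_X']
        simp only [hgr]
        split_ifs <;> first | rfl | omega | (congr 1; omega) | (exfalso; omega)
      have hXk1 : Θ (X (k+1)) = 0 := by
        rw [hΘ, eval₂Hom_X']
        simp only [hgr]
        split_ifs <;> first | rfl | omega | (congr 1; omega) | (exfalso; omega)
      have hΘB : Θ (Fp (k-1) p') = Fp (j-1) p' := by
        rw [hΘapp]
        have hcong := eval₂_congr_avoid (Fp (k-1) p') gr
          (fun i => if j ≤ i ∧ i ≤ k - 1 then 0 else X i) ?_
        · rw [hcong]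
          have hsz := sz_Fp (k-1) p' j (k-1) hj1 le_rfl
          unfold sz at hsz
          rw [coe_eval₂Hom] at hsz
          rw [hsz]
          congr 1
          omega
        · intro i
          by_cases hik : i = k
          · by_cases hjk' : j = k
            · left
              simp only [hgr]
              split_ifs <;> first | rfl | omega | (congr 1; omega) | (exfalso; omega)
            · right
              rw [hik]
              exact Fp_avoid (k-1) p' k (Or.inr (by omega))
          · by_cases hik1 : i = k+1
            · right
              rw [hik1]
              exact Fp_avoid (k-1) p' (k+1) (Or.inr (by omega))
            · left
              simp only [hgr]
              split_ifs <;> first | rfl | omega | (congr 1; omega) | (exfalso; omega)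
      have hΘf : Θ f = eval₂ C (gdown (j+1)) f := by
        have hswapinv : rename (⇑(Equiv.swap j k)) f = f :=
          rename_swap_of_adj f k (fun t ht htk => hinv t ht (by omega)) k j hj1 hjk le_rfl
        rw [hΘapp]
        conv_lhs => rw [← hswapinv]
        rw [eval₂_rename]
        apply eval₂_congr_avoid
        intro i
        by_cases hik1 : i = k + 1
        · right
          rw [hik1]
          exact havoidhigh (k+1) (by omega)
        · left
          show gr (Equiv.swap j k i) = gdown (j+1) i
          by_cases hij : i = j
          · rw [hij, Equiv.swap_apply_left]
            simp only [hgr, hgdown]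
            split_ifs <;> first | rfl | omega | (congr 1; omega) | (exfalso; omega)
          · by_cases hik : i = k
            · rw [hik, Equiv.swap_apply_right]
              simp only [hgr, hgdown]
              split_ifs <;> first | rfl | omega | (congr 1; omega) | (exfalso; omega)
            · rw [Equiv.swap_apply_of_ne_of_ne hij hik]
              simp only [hgr, hgdown]
              split_ifs <;> first | rfl | omega | (congr 1; omega) | (exfalso; omega)
      have hΘrf : Θ (rename (⇑(Equiv.swap k (k+1))) f) = eval₂ C (gdown j) f := by
        rw [hΘapp, eval₂_rename]
        apply eval₂_congr_avoid
        intro i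
        by_cases hik1 : i = k + 1
        · right
          rw [hik1]
          exact havoidhigh (k+1) (by omega)
        · left
          show gr (Equiv.swap k (k+1) i) = gdown j i
          by_cases hik : i = k
          · rw [hik, Equiv.swap_apply_left]
            simp only [hgr, hgdown]
            split_ifs <;> first | rfl | omega | (congr 1; omega) | (exfalso; omega)
          · rw [Equiv.swap_apply_of_ne_of_ne hik hik1]
            simp only [hgr, hgdown]
            split_ifs <;> first | rfl | omega | (congr 1; omega) | (exfalso; omega)
      have happly := congrArg Θ hDk
      simp only [map_mul, map_sub, map_one] at happly
      rw [hXk, hXk1, hΘB, hΘf, hΘrf] at happly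
      linear_combination happly
    have hCL : ∀ j, j ≤ k →
        eval₂ C (gdown (j+1)) f
          = Fp j (p'+1) + eval₂ C (gdown 1) f * ∏ i ∈ Finset.Icc 1 j, (1 - X i) := by
      intro j
      induction j with
      | zero =>
        intro _
        rw [Fp_gt 0 (p'+1) (by omega)]
        have hempty : Finset.Icc 1 0 = (∅ : Finset ℕ) := Finset.Icc_eq_empty (by omega)
        rw [hempty, Finset.prod_empty]
        show eval₂ C (gdown 1) f = 0 + eval₂ C (gdown 1) f * 1
        ring
      | succ j ihj =>
        intro hjk
        have hrec := hREC (j+1) (by omega) hjk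
        have hih := ihj (by omega)
        rw [hih] at hrec
        have hprod : ∏ i ∈ Finset.Icc 1 (j+1), (1 - X i : Poly)
            = (∏ i ∈ Finset.Icc 1 j, (1 - X i)) * (1 - X (j+1)) :=
          Finset.prod_Icc_succ_top (by omega) _
        rw [Fp_rec j p', hprod]
        have hj1 : j + 1 - 1 = j := by omega
        rw [hj1] at hrec
        linear_combination -hrec
    have hE0 : eval₂ C (gdown 1) f = 0 := by
      rw [eval₂_eq]
      apply Finset.sum_eq_zero
      intro d hd
      by_cases hex : ∃ i ∈ d.support, 1 ≤ i ∧ i ≤ k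
      · obtain ⟨i, hid, hi1, hik⟩ := hex
        apply mul_eq_zero_of_right
        apply Finset.prod_eq_zero hid
        have hz : gdown 1 i = 0 := by
          simp only [hgdown]
          rw [if_pos ⟨hi1, hik⟩]
        rw [hz]
        exact zero_pow (Finsupp.mem_support_iff.mp hid)
      · exfalso
        push_neg at hex
        rw [MvPolynomial.mem_support_iff] at hd
        rcases Finset.eq_empty_or_nonempty d.support with hemp | ⟨i, hi⟩
        · have hd0 : d = 0 := Finsupp.support_eq_empty.mp hemp
          rw [hd0] at hd
          exact hd hconst
        · have hi0 := Finsupp.mem_support_iff.mp hi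
          have hii := hex i hi
          rcases Nat.eq_zero_or_pos i with rfl | hip
          · exact hd (havoid0 d hi0)
          · have hik : k < i := by omega
            exact hd (havoidhigh i hik d hi0)
    have hfin1 := hCL k le_rfl
    rw [hgdtop, hE0, zero_mul, add_zero] at hfin1
    exact hfin1

end GT

/-- The transition identity for Grothendieck polynomials: for `1 ≤ p ≤ k`,
`G_{(1^p)}(x_1,...,x_k) = G_{(1^p)}(x_1,...,x_{k-1}) + x_k·G_{(1^{p-1})}(x_1,...,x_{k-1})
− x_k·G_{(1^p)}(x_1,...,x_{k-1})`. -/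
theorem grothendieck_transition (G : Equiv.Perm ℕ → MvPolynomial ℕ ℤ)
    (hG : IsGrothendieck G) (k p : ℕ) (hp : 1 ≤ p) (hpk : p ≤ k) :
    Gcol G k p =
      Gcol G (k-1) p + X k * Gcol G (k-1) (p-1) - X k * Gcol G (k-1) p := by
  obtain ⟨hTop, D, hD, hRec⟩ := hG
  have hmain := GT.main_formula G D hTop hD hRec
  have h0 : Gcol G k p = GT.Fp k p := by
    simp only [Gcol]
    rw [if_pos hpk]
    exact hmain k p hpk
  have h1 : Gcol G (k-1) (p-1) = GT.Fp (k-1) (p-1) := by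
    simp only [Gcol]
    rw [if_pos (by omega : p - 1 ≤ k - 1)]
    exact hmain (k-1) (p-1) (by omega)
  have h2 : Gcol G (k-1) p = GT.Fp (k-1) p := by
    by_cases hpk1 : p ≤ k - 1
    · simp only [Gcol]
      rw [if_pos hpk1]
      exact hmain (k-1) p hpk1
    · simp only [Gcol]
      rw [if_neg hpk1, GT.Fp_gt (k-1) p (by omega)]
  rw [h0, h1, h2]
  obtain ⟨k', rfl⟩ : ∃ k', k = k' + 1 := ⟨k-1, by omega⟩
  obtain ⟨p', rfl⟩ : ∃ p', p = p' + 1 := ⟨p-1, by omega⟩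
  simp only [Nat.add_sub_cancel]
  exact GT.Fp_rec k' p'


end
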